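/- Let Ψ(w) be right-continuous nonincreasing on (0,∞) with Ψ(w) ≤ C w^{-β} as w ↓ 0 for some β ∈ (0,1), Ψ(w) → 0 as w → ∞, and lim_{w↓0} Ψ(w) = ∞. Fix c ≥ 0, and for n ≥ 1 set τ₁ = Ψ^{-1}(n), τ₂ = c/n, τ = τ₁ + τ₂, and H^n(w) = Ψ(⌈w/τ⌉τ − τ₂)/n. Then for every continuously differentiable function g with compact support in (0,∞), n ∫_{(0,∞)} g(w) dH^n(w) → ∫_{(0,∞)} g(w) dΨ(w) as n → ∞. -/

import Mathlib

open MeasureTheory Set Filter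
open scoped ENNReal

/-- The rounding map used to push `ν` forward onto the grid of `Hⁿ`. -/
noncomputable def stmt8Phi (t t2 x : ℝ) : ℝ := ((⌈(x + t2) / t - 1⌉ : ℤ) : ℝ) * t

/-- The grid point associated to `w`: `θ(w) = (⌊w/t⌋+1) t − t₂`. -/
noncomputable def stmt8Theta (t t2 w : ℝ) : ℝ := (((⌊w / t⌋ : ℤ) + 1 : ℤ) : ℝ) * t - t2

lemma stmt8_phi_meas (t t2 : ℝ) : Measurable (stmt8Phi t t2) := by
  unfold stmt8Phi
  exact (measurable_of_countable _).comp
    ((((measurable_id.add_const t2).div_const t).sub_const 1).ceil) |>.mul_const t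

lemma stmt8_lt_phi_iff {t : ℝ} (ht : 0 < t) (t2 a x : ℝ) :
    a < stmt8Phi t t2 x ↔ stmt8Theta t t2 a < x := by
  unfold stmt8Phi stmt8Theta
  rw [← div_lt_iff₀ ht, ← Int.floor_lt, Int.lt_ceil]
  push_cast
  rw [lt_sub_iff_add_lt, lt_div_iff₀ ht, sub_lt_iff_lt_add]

lemma stmt8_phi_le_iff {t : ℝ} (ht : 0 < t) (t2 b x : ℝ) :
    stmt8Phi t t2 x ≤ b ↔ x ≤ stmt8Theta t t2 b := by
  unfold stmt8Phi stmt8Theta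
  rw [← le_div_iff₀ ht, ← Int.le_floor, Int.ceil_le]
  push_cast
  rw [sub_le_iff_le_add, div_le_iff₀ ht, le_sub_iff_add_le]

lemma stmt8_phi_preimage {t : ℝ} (ht : 0 < t) (t2 a b : ℝ) :
    stmt8Phi t t2 ⁻¹' (Ioc a b) = Ioc (stmt8Theta t t2 a) (stmt8Theta t t2 b) := by
  ext x
  simp only [mem_preimage, mem_Ioc, stmt8_lt_phi_iff ht, stmt8_phi_le_iff ht]

lemma stmt8_theta_mono {t : ℝ} (ht : 0 < t) (t2 : ℝ) {a b : ℝ} (hab : a ≤ b) :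
    stmt8Theta t t2 a ≤ stmt8Theta t t2 b := by
  unfold stmt8Theta
  have h : (⌊a / t⌋ : ℤ) ≤ ⌊b / t⌋ := Int.floor_le_floor (by gcongr)
  have h' : ((⌊a / t⌋ : ℤ) : ℝ) ≤ ((⌊b / t⌋ : ℤ) : ℝ) := by exact_mod_cast h
  push_cast at h' ⊢
  nlinarith

lemma stmt8_lt_theta {t : ℝ} (ht : 0 < t) (t2 w : ℝ) :
    w - t2 < stmt8Theta t t2 w := by
  unfold stmt8Theta
  have h := Int.lt_floor_add_one (w / t)
  have h2 := (div_lt_iff₀ ht).1 h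
  push_cast
  nlinarith

lemma stmt8_phi_dist {t1 t2 : ℝ} (ht1 : 0 < t1) (ht2 : 0 ≤ t2) (x : ℝ) :
    |stmt8Phi (t1 + t2) t2 x - x| ≤ t1 + t2 := by
  unfold stmt8Phi
  set t := t1 + t2 with hts
  have ht : 0 < t := by linarith
  have hA := mul_le_mul_of_nonneg_right (Int.le_ceil ((x + t2) / t - 1)) ht.le
  have hB := mul_lt_mul_of_pos_right (Int.ceil_lt_add_one ((x + t2) / t - 1)) ht
  have hdv : (x + t2) / t * t = x + t2 := div_mul_cancel₀ _ ht.ne'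
  rw [abs_le]
  constructor <;> nlinarith

lemma stmt8_restrict_integral_eq (m : Measure ℝ) (g : ℝ → ℝ) (s : ℝ)
    (hz : ∀ x ≤ s, g x = 0) :
    ∫ x, g x ∂m = ∫ x, g x ∂(m.restrict (Ioi s)) := by
  rw [← integral_indicator measurableSet_Ioi]
  congr 1
  funext x
  by_cases h : x ∈ Ioi s
  · simp [indicator_of_mem h]
  · simp [indicator_of_notMem h, hz x (not_lt.1 h)]

/-- Lemma 4.1 (second statement): with τ₁(n) = Ψ⁻¹(n), τ₂(n) = c/n, τ = τ₁+τ₂ and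
H^n(w) = Ψ(⌈w/τ⌉τ − τ₂)/n, for every C¹ function g with compact support in (0,∞),
n ∫ g dH^n → ∫ g dΨ.  Here μ n = −dH^n and ν = −dΨ are the (nonnegative)
Lebesgue–Stieltjes measures of the nonincreasing functions H^n and Ψ, so the claim reads
n ∫ g dμₙ → ∫ g dν. -/
theorem stmt8 (Ψ : ℝ → ℝ) (β C w₀ c : ℝ)
    (hβ : β ∈ Ioo (0:ℝ) 1) (hC : 0 < C) (hw₀ : 0 < w₀) (hc : 0 ≤ c)
    (hrc : ∀ x : ℝ, 0 < x → ContinuousWithinAt Ψ (Ici x) x)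
    (hmono : AntitoneOn Ψ (Ioi 0))
    (hbound : ∀ w : ℝ, 0 < w → w < w₀ → Ψ w ≤ C * w ^ (-β))
    (hinf : Tendsto Ψ (nhdsWithin 0 (Ioi 0)) atTop)
    (hlim : Tendsto Ψ atTop (nhds 0))
    (τ₁ τ₂ τ : ℕ → ℝ) (Hn : ℕ → ℝ → ℝ)
    (hτ₁ : ∀ n : ℕ, 1 ≤ n → τ₁ n = sInf {w : ℝ | 0 < w ∧ Ψ w ≤ n})
    (hτ₂ : ∀ n : ℕ, 1 ≤ n → τ₂ n = c / n)
    (hτ : ∀ n : ℕ, 1 ≤ n → τ n = τ₁ n + τ₂ n)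
    (hHn : ∀ n : ℕ, 1 ≤ n → ∀ w : ℝ, 0 ≤ w →
      Hn n w = Ψ ((((⌊w / τ n⌋ : ℤ) + 1 : ℤ) : ℝ) * τ n - τ₂ n) / n)
    (μ : ℕ → Measure ℝ) (ν : Measure ℝ)
    (hμ : ∀ n : ℕ, 1 ≤ n → ∀ a b : ℝ, 0 ≤ a → a ≤ b →
      μ n (Ioc a b) = ENNReal.ofReal (Hn n a - Hn n b))
    (hν : ∀ a b : ℝ, 0 < a → a ≤ b → ν (Ioc a b) = ENNReal.ofReal (Ψ a - Ψ b))
    (g : ℝ → ℝ) (hg : ContDiff ℝ 1 g) (hgsupp : HasCompactSupport g)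
    (hgsupp' : tsupport g ⊆ Ioi 0) :
    Tendsto (fun n : ℕ => (n : ℝ) * ∫ w, g w ∂(μ n)) atTop
      (nhds (∫ w, g w ∂ν)) := by
  classical
  -- trivial case: g = 0
  rcases eq_or_ne (tsupport g) ∅ with h0 | hne
  · have hg0 : g = 0 := by rwa [tsupport_eq_empty_iff] at h0
    simp only [hg0, Pi.zero_apply, integral_zero, mul_zero]
    exact tendsto_const_nhds
  have hne' : (tsupport g).Nonempty := nonempty_iff_ne_empty.2 hne
  set δ := sInf (tsupport g) with hδdef
  have hδmem : δ ∈ tsupport g := IsCompact.sInf_mem hgsupp hne'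
  have hδpos : 0 < δ := hgsupp' hδmem
  have hsupp : tsupport g ⊆ Ici δ := fun x hx =>
    csInf_le (IsCompact.bddBelow hgsupp) hx
  have hgz : ∀ x : ℝ, x < δ → g x = 0 := fun x hx =>
    image_eq_zero_of_notMem_tsupport (fun h => absurd (hsupp h) (by simpa using hx.not_ge))
  obtain ⟨B, hB⟩ := hgsupp.exists_bound_of_continuous hg.continuous
  -- nonnegativity of Ψ
  have hΨ0 : ∀ x : ℝ, 0 < x → 0 ≤ Ψ x := by
    intro x hx
    refine le_of_tendsto hlim ?_
    filter_upwards [eventually_ge_atTop x] with y hy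
    exact hmono hx (lt_of_lt_of_le hx hy) hy
  -- basic facts about τ₁, τ₂, τ
  have hτ₂nn : ∀ n : ℕ, 1 ≤ n → 0 ≤ τ₂ n := by
    intro n hn
    rw [hτ₂ n hn]
    positivity
  have hτ₁pos : ∀ n : ℕ, 1 ≤ n → 0 < τ₁ n := by
    intro n hn
    rw [hτ₁ n hn]
    have hSne : {w : ℝ | 0 < w ∧ Ψ w ≤ (n : ℝ)}.Nonempty := by
      obtain ⟨w, hw1, hw2⟩ := ((hlim.eventually_lt_const zero_lt_one).and
        (eventually_ge_atTop 1)).exists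
      exact ⟨w, lt_of_lt_of_le one_pos hw2,
        hw1.le.trans (by exact_mod_cast Nat.one_le_cast.mpr hn)⟩
    have hev : ∀ᶠ w in nhdsWithin 0 (Ioi 0), (n : ℝ) < Ψ w :=
      hinf.eventually_gt_atTop n
    obtain ⟨u, hu, hsub⟩ := mem_nhdsGT_iff_exists_Ioo_subset.1 hev
    refine lt_of_lt_of_le hu (le_csInf hSne ?_)
    intro w hw
    by_contra hlt
    push_neg at hlt
    exact absurd hw.2 (not_le.2 (hsub ⟨hw.1, hlt⟩))
  have hτpos : ∀ n : ℕ, 1 ≤ n → 0 < τ n := by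
    intro n hn
    rw [hτ n hn]
    have := hτ₁pos n hn; have := hτ₂nn n hn; linarith
  -- τ₁ + τ₂ → 0
  have hτ₂to0 : Tendsto τ₂ atTop (nhds (0:ℝ)) :=
    Tendsto.congr' (((eventually_ge_atTop 1).mono fun n hn => (hτ₂ n hn).symm))
      (tendsto_const_div_atTop_nhds_zero_nat c)
  have hτ₁to0 : Tendsto τ₁ atTop (nhds (0:ℝ)) := by
    refine tendsto_order.2 ⟨fun a ha => ?_, fun a ha => ?_⟩
    · filter_upwards [eventually_ge_atTop 1] with n hn
      exact lt_of_lt_of_le ha (hτ₁pos n hn).le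
    · have hev : ∀ᶠ n : ℕ in atTop, Ψ (a / 2) ≤ (n : ℝ) := by
        filter_upwards [eventually_ge_atTop ⌈Ψ (a / 2)⌉₊] with n hn
        calc Ψ (a / 2) ≤ (⌈Ψ (a / 2)⌉₊ : ℝ) := Nat.le_ceil _
          _ ≤ (n : ℝ) := by exact_mod_cast hn
      filter_upwards [hev, eventually_ge_atTop 1] with n h1 h2
      rw [hτ₁ n h2]
      refine lt_of_le_of_lt (csInf_le ⟨0, fun w hw => hw.1.le⟩ ⟨by linarith, h1⟩) (by linarith)
  have hτto0 : Tendsto (fun n => τ₁ n + τ₂ n) atTop (nhds (0:ℝ)) := by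
    simpa using hτ₁to0.add hτ₂to0
  -- the restricted limit measure
  set ν' : Measure ℝ := ν.restrict (Ioi (δ / 4)) with hν'def
  have hν'fin : ν (Ioi (δ / 4)) < ⊤ := by
    have hcover : Ioi (δ / 4) = ⋃ k : ℕ, Ioc (δ / 4) (δ / 4 + (k + 1)) := by
      ext x
      simp only [mem_Ioi, mem_iUnion, mem_Ioc]
      constructor
      · intro hx
        obtain ⟨k, hk⟩ := exists_nat_ge (x - δ / 4)
        exact ⟨k, hx, by push_cast; linarith⟩
      · rintro ⟨k, h1, -⟩; exact h1
    rw [hcover, Directed.measure_iUnion ?_]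
    · refine lt_of_le_of_lt (iSup_le fun k => ?_) (ENNReal.ofReal_lt_top (r := Ψ (δ / 4)))
      rw [hν _ _ (by positivity) (le_add_of_nonneg_right (by positivity))]
      refine ENNReal.ofReal_le_ofReal ?_
      have := hΨ0 (δ / 4 + (k + 1)) (by positivity)
      linarith
    · refine (Monotone.directed_le ?_)
      intro i j hij
      refine Ioc_subset_Ioc_right ?_
      have : (i : ℝ) ≤ j := by exact_mod_cast hij
      linarith
  haveI : IsFiniteMeasure ν' := ⟨by rw [hν'def, Measure.restrict_apply_univ]; exact hν'fin⟩
  -- pointwise convergence of the rounding maps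
  have hφx : ∀ x : ℝ, Tendsto (fun n => stmt8Phi (τ n) (τ₂ n) x) atTop (nhds x) := by
    intro x
    rw [tendsto_iff_dist_tendsto_zero]
    refine squeeze_zero' (Eventually.of_forall fun n => dist_nonneg) ?_ hτto0
    filter_upwards [eventually_ge_atTop 1] with n hn
    rw [Real.dist_eq, hτ n hn]
    exact stmt8_phi_dist (hτ₁pos n hn) (hτ₂nn n hn) x
  -- dominated convergence
  have hDCT : Tendsto (fun n : ℕ => ∫ x, g (stmt8Phi (τ n) (τ₂ n) x) ∂ν') atTop
      (nhds (∫ x, g x ∂ν')) := by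
    refine tendsto_integral_filter_of_dominated_convergence (fun _ => B)
      (Eventually.of_forall fun n =>
        (hg.continuous.measurable.comp (stmt8_phi_meas _ _)).aestronglyMeasurable)
      (Eventually.of_forall fun n => ae_of_all _ fun x => hB _)
      (integrable_const B)
      (ae_of_all _ fun x => (hg.continuous.tendsto x).comp (hφx x))
  -- the key eventual identity
  have E : ∀ᶠ n : ℕ in atTop,
      (n : ℝ) * ∫ w, g w ∂(μ n) = ∫ x, g (stmt8Phi (τ n) (τ₂ n) x) ∂ν' := by
    filter_upwards [eventually_ge_atTop 1,
      hτto0.eventually_lt_const (by positivity : (0:ℝ) < δ / 4)] with n hn1 hsm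
    have ht1 := hτ₁pos n hn1
    have ht2 := hτ₂nn n hn1
    have htpos := hτpos n hn1
    have hncast : (0:ℝ) < (n : ℝ) := by exact_mod_cast Nat.pos_of_ne_zero (by omega)
    -- measure identity
    have hM : ((n : ℝ≥0∞) • μ n).restrict (Ioi (δ / 2)) =
        (Measure.map (stmt8Phi (τ n) (τ₂ n)) ν').restrict (Ioi (δ / 2)) := by
      have hboth : ∀ a b : ℝ, a < b →
          ((n : ℝ≥0∞) • μ n).restrict (Ioi (δ / 2)) (Ioc a b) =
            (Measure.map (stmt8Phi (τ n) (τ₂ n)) ν').restrict (Ioi (δ / 2)) (Ioc a b) ∧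
          ((n : ℝ≥0∞) • μ n).restrict (Ioi (δ / 2)) (Ioc a b) ≠ ⊤ := by
        intro a b hab
        set a' := a ⊔ δ / 2 with ha'def
        have ha'0 : (0:ℝ) ≤ a' := le_trans (by positivity) le_sup_right
        have ha'δ : δ / 2 ≤ a' := le_sup_right
        have hL : ((n : ℝ≥0∞) • μ n).restrict (Ioi (δ / 2)) (Ioc a b) =
            (n : ℝ≥0∞) * μ n (Ioc a' b) := by
          rw [Measure.restrict_apply measurableSet_Ioc, Ioc_inter_Ioi,
            Measure.smul_apply, smul_eq_mul]
        have hR : (Measure.map (stmt8Phi (τ n) (τ₂ n)) ν').restrict (Ioi (δ / 2)) (Ioc a b) =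
            ν (stmt8Phi (τ n) (τ₂ n) ⁻¹' (Ioc a' b) ∩ Ioi (δ / 4)) := by
          rw [Measure.restrict_apply measurableSet_Ioc, Ioc_inter_Ioi,
            Measure.map_apply (stmt8_phi_meas _ _) measurableSet_Ioc, hν'def,
            Measure.restrict_apply ((stmt8_phi_meas _ _) measurableSet_Ioc)]
        by_cases hab' : a' ≤ b
        · have hθlb : δ / 4 < stmt8Theta (τ n) (τ₂ n) a' := by
            have h1 := stmt8_lt_theta htpos (τ₂ n) a'
            have h2 : τ₂ n < δ / 4 := by linarith
            linarith
          have hθpos : 0 < stmt8Theta (τ n) (τ₂ n) a' := lt_trans (by positivity) hθlb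
          have hθle : stmt8Theta (τ n) (τ₂ n) a' ≤ stmt8Theta (τ n) (τ₂ n) b :=
            stmt8_theta_mono htpos _ hab'
          have hsub : Ioc (stmt8Theta (τ n) (τ₂ n) a') (stmt8Theta (τ n) (τ₂ n) b) ⊆
              Ioi (δ / 4) := fun x hx => lt_trans hθlb hx.1
          have hRval : (Measure.map (stmt8Phi (τ n) (τ₂ n)) ν').restrict (Ioi (δ / 2))
              (Ioc a b) = ENNReal.ofReal
                (Ψ (stmt8Theta (τ n) (τ₂ n) a') - Ψ (stmt8Theta (τ n) (τ₂ n) b)) := by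
            rw [hR, stmt8_phi_preimage htpos, inter_eq_self_of_subset_left hsub,
              hν _ _ hθpos hθle]
          have hLval : ((n : ℝ≥0∞) • μ n).restrict (Ioi (δ / 2)) (Ioc a b) =
              ENNReal.ofReal
                (Ψ (stmt8Theta (τ n) (τ₂ n) a') - Ψ (stmt8Theta (τ n) (τ₂ n) b)) := by
            rw [hL, hμ n hn1 a' b ha'0 hab', ← ENNReal.ofReal_natCast n,
              ← ENNReal.ofReal_mul (Nat.cast_nonneg n)]
            congr 1
            rw [hHn n hn1 a' ha'0, hHn n hn1 b (ha'0.trans hab')]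
            unfold stmt8Theta
            field_simp
          rw [hLval, hRval]
          exact ⟨rfl, ENNReal.ofReal_ne_top⟩
        · have hempty : Ioc a' b = ∅ := Ioc_eq_empty (fun h => hab' h.le)
          rw [hL, hR, hempty]
          simp
      refine Measure.ext_of_Ioc' _ _ (fun a b h => (hboth a b h).2)
        (fun a b h => (hboth a b h).1)
    -- integral chain
    calc (n : ℝ) * ∫ w, g w ∂(μ n)
        = ∫ w, g w ∂((n : ℝ≥0∞) • μ n) := by
          rw [integral_smul_measure, ENNReal.toReal_natCast, smul_eq_mul]
      _ = ∫ w, g w ∂(((n : ℝ≥0∞) • μ n).restrict (Ioi (δ / 2))) :=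
          stmt8_restrict_integral_eq _ g _ (fun x hx => hgz x (by linarith))
      _ = ∫ w, g w ∂((Measure.map (stmt8Phi (τ n) (τ₂ n)) ν').restrict (Ioi (δ / 2))) := by
          rw [hM]
      _ = ∫ w, g w ∂(Measure.map (stmt8Phi (τ n) (τ₂ n)) ν') :=
          (stmt8_restrict_integral_eq _ g _ (fun x hx => hgz x (by linarith))).symm
      _ = ∫ x, g (stmt8Phi (τ n) (τ₂ n) x) ∂ν' :=
          integral_map (stmt8_phi_meas _ _).aemeasurable
            hg.continuous.aestronglyMeasurable
  have hgν : ∫ w, g w ∂ν = ∫ w, g w ∂ν' :=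
    stmt8_restrict_integral_eq ν g (δ / 4) (fun x hx => hgz x (by linarith))
  rw [hgν]
  exact Tendsto.congr' (E.mono fun n h => h.symm) hDCT
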